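/- Let $(k,l)$ be locally integrable kernels on $(0,\infty)$ with $k \ast l = 1$, let $\gamma > 0$, and let $r_\gamma$ be the nonnegative locally integrable solution of $r_\gamma + \gamma(l \ast r_\gamma) = l$ on $(0,\infty)$ and $s_\gamma$ the nonnegative solution of $s_\gamma + \gamma(l \ast s_\gamma) = 1$. Then $r_\gamma$ is integrable on $(0,\infty)$ with $\int_0^\infty r_\gamma(\tau)\,d\tau \le 1/\gamma$. -/

import Mathlib

open MeasureTheory Real

noncomputable def conv (f g : ℝ → ℝ) (t : ℝ) : ℝ := ∫ τ in (0:ℝ)..t, f (t - τ) * g τ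

namespace RGammaAux

open Set
open scoped ENNReal

lemma ae_shift {t : ℝ} {p : ℝ → Prop} (h : ∀ᵐ x ∂(volume : Measure ℝ), p x) :
    ∀ᵐ τ ∂(volume : Measure ℝ), p (t - τ) :=
  (Measure.measurePreserving_sub_left volume t).quasiMeasurePreserving.ae h

lemma conv_comm (f g : ℝ → ℝ) (t : ℝ) : conv f g t = conv g f t := by
  unfold conv
  have h := intervalIntegral.integral_comp_sub_left (a := (0:ℝ)) (b := t)
      (fun x => f x * g (t - x)) t
  simp only [sub_sub_cancel, sub_zero, sub_self] at h
  rw [h]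
  congr 1
  ext x
  ring

lemma conv_Ioc (f g : ℝ → ℝ) {t : ℝ} (ht : 0 ≤ t) :
    conv f g t = ∫ τ in Ioc (0:ℝ) t, f (t - τ) * g τ := by
  rw [conv, intervalIntegral.integral_of_le ht]

lemma conv_Ioo (f g : ℝ → ℝ) {t : ℝ} (ht : 0 ≤ t) :
    conv f g t = ∫ τ in Ioo (0:ℝ) t, f (t - τ) * g τ := by
  rw [conv_Ioc f g ht, ← integral_Ioc_eq_integral_Ioo]

lemma conv_congr_left {f f' : ℝ → ℝ} (g : ℝ → ℝ)
    (h : ∀ᵐ x ∂(volume.restrict (Ioi (0:ℝ))), f x = f' x) {t : ℝ} (ht : 0 < t) :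
    conv f g t = conv f' g t := by
  rw [conv_Ioo _ _ ht.le, conv_Ioo _ _ ht.le]
  have h1 : ∀ᵐ x ∂(volume : Measure ℝ), x ∈ Ioi (0:ℝ) → f x = f' x := ae_imp_of_ae_restrict h
  have h2 := ae_shift (t := t) h1
  refine setIntegral_congr_ae measurableSet_Ioo ?_
  filter_upwards [h2] with τ hτ hmem
  rw [hτ (by simp only [mem_Ioi]; linarith [hmem.2])]

lemma conv_congr_right (f : ℝ → ℝ) {g g' : ℝ → ℝ}
    (h : ∀ᵐ x ∂(volume.restrict (Ioi (0:ℝ))), g x = g' x) {t : ℝ} (ht : 0 < t) :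
    conv f g t = conv f g' t := by
  rw [conv_Ioo _ _ ht.le, conv_Ioo _ _ ht.le]
  have h1 : ∀ᵐ x ∂(volume : Measure ℝ), x ∈ Ioi (0:ℝ) → g x = g' x := ae_imp_of_ae_restrict h
  refine setIntegral_congr_ae measurableSet_Ioo ?_
  filter_upwards [h1] with τ hτ hmem
  rw [hτ hmem.1]

lemma conv_const_mul (c : ℝ) (f g : ℝ → ℝ) (t : ℝ) :
    conv (fun u => c * f u) g t = c * conv f g t := by
  unfold conv
  rw [← intervalIntegral.integral_const_mul]
  congr 1; ext τ; ring

lemma Ioi_eq_iUnion : Ioi (0:ℝ) = ⋃ n : ℕ, Ioc (0:ℝ) (n + 1) := by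
  ext x
  simp only [mem_Ioi, mem_iUnion, mem_Ioc]
  exact ⟨fun hx => ⟨⌈x⌉₊, hx, le_trans (Nat.le_ceil x) (by linarith)⟩, fun ⟨n, hx, _⟩ => hx⟩

lemma exists_rep (f : ℝ → ℝ) (hf : ∀ T > (0:ℝ), IntegrableOn f (Ioc 0 T)) :
    ∃ F : ℝ → ℝ, Measurable F ∧ (∀ x, x ∉ Ioi (0:ℝ) → F x = 0) ∧
      (∀ᵐ x ∂(volume.restrict (Ioi (0:ℝ))), f x = F x) ∧
      (∀ T > (0:ℝ), IntegrableOn F (Ioc 0 T)) := by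
  have hm : AEStronglyMeasurable f (volume.restrict (Ioi (0:ℝ))) := by
    rw [Ioi_eq_iUnion, aestronglyMeasurable_iUnion_iff]
    intro n
    exact (hf (n + 1) (by positivity)).aestronglyMeasurable
  refine ⟨(Ioi (0:ℝ)).indicator hm.mk,
    (hm.stronglyMeasurable_mk.indicator measurableSet_Ioi).measurable,
    fun x hx => indicator_of_notMem hx _, ?_, ?_⟩
  · filter_upwards [hm.ae_eq_mk, ae_restrict_mem measurableSet_Ioi] with x h1 h2
    rw [h1, indicator_of_mem h2]
  · intro T hT
    have hae : f =ᵐ[volume.restrict (Ioc (0:ℝ) T)] (Ioi (0:ℝ)).indicator hm.mk := by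
      apply ae_restrict_of_ae_restrict_of_subset (Ioc_subset_Ioi_self)
      filter_upwards [hm.ae_eq_mk, ae_restrict_mem measurableSet_Ioi] with x h1 h2
      rw [h1, indicator_of_mem h2]
    exact (hf T hT).congr hae

lemma lint_ne_top {F : ℝ → ℝ} {T : ℝ} (h : IntegrableOn F (Ioc 0 T)) :
    ∫⁻ x in Icc (0:ℝ) T, (‖F x‖₊ : ℝ≥0∞) ≠ ∞ := by
  rw [← Measure.restrict_congr_set Ioc_ae_eq_Icc]
  exact h.2.ne

lemma ae_integrableOn_mul (F G : ℝ → ℝ) (hF : Measurable F) (hG : Measurable G)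
    (hFi : ∀ T > (0:ℝ), IntegrableOn F (Ioc 0 T)) (hGi : ∀ T > (0:ℝ), IntegrableOn G (Ioc 0 T)) :
    ∀ᵐ t ∂(volume.restrict (Ioi (0:ℝ))), IntegrableOn (fun τ => F (t - τ) * G τ) (Ioc 0 t) := by
  rw [Ioi_eq_iUnion, ae_restrict_iUnion_iff]
  intro n
  set T : ℝ := (n : ℝ) + 1 with hTdef
  have hT : 0 < T := by positivity
  set μT := volume.restrict (Ioc (0:ℝ) T) with hμT
  set Φ : ℝ × ℝ → ℝ := fun p => ({q : ℝ × ℝ | 0 < q.2 ∧ q.2 ≤ q.1} : Set (ℝ × ℝ)).indicator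
      (fun q => F (q.1 - q.2) * G q.2) p with hΦ
  have hEm : MeasurableSet ({q : ℝ × ℝ | 0 < q.2 ∧ q.2 ≤ q.1} : Set (ℝ × ℝ)) :=
    (measurableSet_lt measurable_const measurable_snd).inter
      (measurableSet_le measurable_snd measurable_fst)
  have hΦm : Measurable Φ :=
    ((hF.comp (measurable_fst.sub measurable_snd)).mul (hG.comp measurable_snd)).indicator hEm
  have hInt : Integrable Φ (μT.prod volume) := by
    constructor
    · exact hΦm.aestronglyMeasurable
    · rw [hasFiniteIntegral_def]
      calc ∫⁻ p, (‖Φ p‖₊ : ℝ≥0∞) ∂(μT.prod volume)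
          = ∫⁻ τ, ∫⁻ t, (‖Φ (t, τ)‖₊ : ℝ≥0∞) ∂μT ∂volume := by
            exact lintegral_prod_symm _ (hΦm.nnnorm.coe_nnreal_ennreal.aemeasurable)
        _ ≤ ∫⁻ τ, ((Ioc (0:ℝ) T).indicator (fun x => (‖G x‖₊ : ℝ≥0∞)) τ) *
              (∫⁻ x in Icc (0:ℝ) T, (‖F x‖₊ : ℝ≥0∞)) ∂volume := by
            apply lintegral_mono
            intro τ
            calc ∫⁻ t, (‖Φ (t, τ)‖₊ : ℝ≥0∞) ∂μT
                ≤ ∫⁻ t, ((Ioc (0:ℝ) T).indicator (fun x => (‖G x‖₊ : ℝ≥0∞)) τ) *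
                    ((Icc (0:ℝ) T).indicator (fun x => (‖F x‖₊ : ℝ≥0∞)) (t - τ)) ∂μT := by
                  apply lintegral_mono_ae
                  filter_upwards [ae_restrict_mem measurableSet_Ioc] with t ht
                  by_cases hc : 0 < τ ∧ τ ≤ t
                  · have h1 : Φ (t, τ) = F (t - τ) * G τ := by
                      simp only [hΦ, indicator_apply, mem_setOf_eq]; rw [if_pos hc]
                    rw [h1, indicator_of_mem (show τ ∈ Ioc (0:ℝ) T from ⟨hc.1, hc.2.trans ht.2⟩),
                      indicator_of_mem (show t - τ ∈ Icc (0:ℝ) T by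
                        constructor <;> [linarith [hc.2]; linarith [ht.1, ht.2, hc.1]])]
                    simp [nnnorm_mul, mul_comm]
                  · have h1 : Φ (t, τ) = 0 := by
                      simp only [hΦ, indicator_apply, mem_setOf_eq]; rw [if_neg hc]
                    rw [h1]
                    simp
                _ ≤ ((Ioc (0:ℝ) T).indicator (fun x => (‖G x‖₊ : ℝ≥0∞)) τ) *
                      ∫⁻ t, ((Icc (0:ℝ) T).indicator (fun x => (‖F x‖₊ : ℝ≥0∞)) (t - τ)) ∂volume := by
                  rw [lintegral_const_mul]
                  · apply mul_le_mul_right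
                    exact lintegral_mono' Measure.restrict_le_self le_rfl
                  · exact ((measurable_nnnorm.comp hF).coe_nnreal_ennreal.indicator
                      measurableSet_Icc).comp (measurable_id.sub measurable_const)
                _ = ((Ioc (0:ℝ) T).indicator (fun x => (‖G x‖₊ : ℝ≥0∞)) τ) *
                      (∫⁻ x in Icc (0:ℝ) T, (‖F x‖₊ : ℝ≥0∞)) := by
                  rw [lintegral_sub_right_eq_self
                    (fun x => (Icc (0:ℝ) T).indicator (fun x => (‖F x‖₊ : ℝ≥0∞)) x) τ,
                    lintegral_indicator measurableSet_Icc]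
        _ = (∫⁻ x in Ioc (0:ℝ) T, (‖G x‖₊ : ℝ≥0∞)) * (∫⁻ x in Icc (0:ℝ) T, (‖F x‖₊ : ℝ≥0∞)) := by
            rw [lintegral_mul_const, lintegral_indicator measurableSet_Ioc]
            exact (measurable_nnnorm.comp hG).coe_nnreal_ennreal.indicator measurableSet_Ioc
        _ < ∞ := by
            exact ENNReal.mul_lt_top (hGi T hT).2 (lint_ne_top (hFi T hT)).lt_top
  have key := hInt.prod_right_ae
  filter_upwards [key] with t ht
  have : (fun τ => Φ (t, τ)) = (Ioc (0:ℝ) t).indicator (fun τ => F (t - τ) * G τ) := by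
    ext τ
    simp only [hΦ, indicator_apply, mem_setOf_eq, mem_Ioc]
  rw [this] at ht
  exact (integrable_indicator_iff measurableSet_Ioc).1 ht

noncomputable def Psi (L F G : ℝ → ℝ) (t : ℝ) : ℝ × ℝ → ℝ :=
  fun p => ({p : ℝ × ℝ | 0 < p.1 ∧ 0 < p.2 ∧ p.1 + p.2 ≤ t}).indicator
    (fun p => F p.1 * G p.2 * L (t - p.1 - p.2)) p

lemma conv_conv_eq_integral (L F G : ℝ → ℝ) {t : ℝ} (ht : 0 < t) :
    conv (conv L G) F t = ∫ τ, (∫ σ, Psi L F G t (τ, σ) ∂volume) ∂volume := by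
  have step1 : conv (conv L G) F t
      = ∫ τ in Ioc (0:ℝ) t, (∫ σ, Psi L F G t (τ, σ) ∂volume) := by
    rw [conv_Ioc _ _ ht.le]
    refine setIntegral_congr_fun measurableSet_Ioc fun τ hτ => ?_
    have h1 : (fun σ => Psi L F G t (τ, σ))
        = (Ioc (0:ℝ) (t - τ)).indicator (fun σ => F τ * G σ * L (t - τ - σ)) := by
      ext σ
      simp only [Psi, indicator_apply, mem_setOf_eq, mem_Ioc]
      have hiff : (0 < τ ∧ 0 < σ ∧ τ + σ ≤ t) ↔ (0 < σ ∧ σ ≤ t - τ) := by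
        constructor
        · rintro ⟨-, h2, h3⟩; exact ⟨h2, by linarith⟩
        · rintro ⟨h2, h3⟩; exact ⟨hτ.1, h2, by linarith⟩
      rw [if_congr hiff rfl rfl]
    rw [h1, integral_indicator measurableSet_Ioc, conv_Ioc _ _ (by linarith [hτ.2] : (0:ℝ) ≤ t - τ)]
    calc (∫ σ in Ioc (0:ℝ) (t - τ), L (t - τ - σ) * G σ) * F τ
        = F τ * ∫ σ in Ioc (0:ℝ) (t - τ), L (t - τ - σ) * G σ := mul_comm _ _
      _ = ∫ σ in Ioc (0:ℝ) (t - τ), F τ * (L (t - τ - σ) * G σ) := (integral_const_mul _ _).symm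
      _ = ∫ σ in Ioc (0:ℝ) (t - τ), F τ * G σ * L (t - τ - σ) := by
          refine setIntegral_congr_fun measurableSet_Ioc fun σ _ => ?_
          ring
  rw [step1]
  refine setIntegral_eq_integral_of_forall_compl_eq_zero fun τ hτ => ?_
  have : (fun σ => Psi L F G t (τ, σ)) = fun _ => (0:ℝ) := by
    ext σ
    refine indicator_of_notMem ?_ _
    rintro ⟨h1, h2, h3⟩
    simp only [mem_Ioc, not_and_or, not_lt, not_le] at hτ
    rcases hτ with h | h
    · linarith
    · linarith
  rw [this, integral_zero]

lemma psi_symm (L F G : ℝ → ℝ) (t τ σ : ℝ) : Psi L F G t (τ, σ) = Psi L G F t (σ, τ) := by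
  simp only [Psi, indicator_apply, mem_setOf_eq]
  have hiff : (0 < τ ∧ 0 < σ ∧ τ + σ ≤ t) ↔ (0 < σ ∧ 0 < τ ∧ σ + τ ≤ t) := by
    constructor <;> rintro ⟨h1, h2, h3⟩ <;> exact ⟨h2, h1, by linarith⟩
  have hval : F τ * G σ * L (t - τ - σ) = G σ * F τ * L (t - σ - τ) := by
    rw [show t - τ - σ = t - σ - τ by ring]; ring
  rw [if_congr hiff hval rfl]

lemma tri_of_integrable (L F G : ℝ → ℝ) {t : ℝ} (ht : 0 < t)
    (hI : Integrable (Psi L F G t) (volume.prod volume)) :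
    conv (conv L G) F t = conv (conv L F) G t := by
  rw [conv_conv_eq_integral L F G ht, conv_conv_eq_integral L G F ht]
  have hswap := integral_integral_swap (f := fun τ σ => Psi L F G t (τ, σ))
    (μ := (volume : Measure ℝ)) (ν := (volume : Measure ℝ)) (by exact hI)
  rw [hswap]
  congr 1
  ext σ
  congr 1
  ext τ
  show Psi L F G t (τ, σ) = Psi L G F t (σ, τ)
  exact psi_symm L F G t τ σ

lemma psi_ae_integrable (L F G : ℝ → ℝ) (hL : Measurable L) (hF : Measurable F)
    (hG : Measurable G)
    (hLi : ∀ T > (0:ℝ), IntegrableOn L (Ioc 0 T)) (hFi : ∀ T > (0:ℝ), IntegrableOn F (Ioc 0 T))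
    (hGi : ∀ T > (0:ℝ), IntegrableOn G (Ioc 0 T)) :
    ∀ᵐ t ∂(volume.restrict (Ioi (0:ℝ))), Integrable (Psi L F G t) (volume.prod volume) := by
  rw [Ioi_eq_iUnion, ae_restrict_iUnion_iff]
  intro n
  set T : ℝ := (n : ℝ) + 1 with hTdef
  have hT : 0 < T := by positivity
  set μT := volume.restrict (Ioc (0:ℝ) T) with hμT
  set Θ : ℝ × (ℝ × ℝ) → ℝ := fun q => Psi L F G q.1 q.2 with hΘ
  have hΘm : Measurable Θ := by
    apply Measurable.indicator
    · exact ((hF.comp (measurable_fst.comp measurable_snd)).mul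
        (hG.comp (measurable_snd.comp measurable_snd))).mul
        (hL.comp ((measurable_fst.sub (measurable_fst.comp measurable_snd)).sub
          (measurable_snd.comp measurable_snd)))
    · exact ((measurableSet_lt measurable_const (measurable_fst.comp measurable_snd)).inter
        ((measurableSet_lt measurable_const (measurable_snd.comp measurable_snd)).inter
          (measurableSet_le ((measurable_fst.comp measurable_snd).add
            (measurable_snd.comp measurable_snd)) measurable_fst)))
  have hInt : Integrable Θ (μT.prod (volume.prod volume)) := by
    constructor
    · exact hΘm.aestronglyMeasurable
    · rw [hasFiniteIntegral_def]
      set A : ℝ → ℝ≥0∞ := (Ioc (0:ℝ) T).indicator (fun x => (‖F x‖₊ : ℝ≥0∞)) with hA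
      set B : ℝ → ℝ≥0∞ := (Ioc (0:ℝ) T).indicator (fun x => (‖G x‖₊ : ℝ≥0∞)) with hB
      set C : ℝ → ℝ≥0∞ := (Icc (0:ℝ) T).indicator (fun x => (‖L x‖₊ : ℝ≥0∞)) with hC
      have hAm : Measurable A :=
        (measurable_nnnorm.comp hF).coe_nnreal_ennreal.indicator measurableSet_Ioc
      have hBm : Measurable B :=
        (measurable_nnnorm.comp hG).coe_nnreal_ennreal.indicator measurableSet_Ioc
      have hCm : Measurable C :=
        (measurable_nnnorm.comp hL).coe_nnreal_ennreal.indicator measurableSet_Icc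
      set CL : ℝ≥0∞ := ∫⁻ x, C x ∂volume with hCL
      calc ∫⁻ q, (‖Θ q‖₊ : ℝ≥0∞) ∂(μT.prod (volume.prod volume))
          = ∫⁻ p, ∫⁻ t, (‖Θ (t, p)‖₊ : ℝ≥0∞) ∂μT ∂(volume.prod volume) :=
            lintegral_prod_symm _ hΘm.nnnorm.coe_nnreal_ennreal.aemeasurable
        _ ≤ ∫⁻ p, A p.1 * (B p.2 * CL) ∂(volume.prod volume) := by
            apply lintegral_mono
            intro p
            calc ∫⁻ t, (‖Θ (t, p)‖₊ : ℝ≥0∞) ∂μT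
                ≤ ∫⁻ t, (A p.1 * B p.2) * C (t - (p.1 + p.2)) ∂μT := by
                  apply lintegral_mono_ae
                  filter_upwards [ae_restrict_mem measurableSet_Ioc] with t ht
                  by_cases hc : 0 < p.1 ∧ 0 < p.2 ∧ p.1 + p.2 ≤ t
                  · have h1 : Θ (t, p) = F p.1 * G p.2 * L (t - p.1 - p.2) := by
                      simp only [hΘ, Psi, indicator_apply, mem_setOf_eq]; rw [if_pos hc]
                    rw [h1, hA, hB, hC,
                      indicator_of_mem (show p.1 ∈ Ioc (0:ℝ) T from
                        ⟨hc.1, by linarith [hc.2.1, hc.2.2, ht.2]⟩),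
                      indicator_of_mem (show p.2 ∈ Ioc (0:ℝ) T from
                        ⟨hc.2.1, by linarith [hc.1, hc.2.2, ht.2]⟩),
                      indicator_of_mem (show t - (p.1 + p.2) ∈ Icc (0:ℝ) T from
                        ⟨by linarith [hc.2.2], by linarith [hc.1, hc.2.1, ht.2]⟩)]
                    rw [show t - p.1 - p.2 = t - (p.1 + p.2) by ring]
                    simp [nnnorm_mul]
                  · have h1 : Θ (t, p) = 0 := by
                      simp only [hΘ, Psi, indicator_apply, mem_setOf_eq]; rw [if_neg hc]
                    rw [h1]
                    simp
                _ ≤ (A p.1 * B p.2) * ∫⁻ t, C (t - (p.1 + p.2)) ∂volume := by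
                  have hCm2 : Measurable (fun t : ℝ => C (t - (p.1 + p.2))) :=
                    hCm.comp (measurable_sub_const _)
                  rw [lintegral_const_mul _ hCm2]
                  exact mul_le_mul_right (lintegral_mono' Measure.restrict_le_self le_rfl) _
                _ = A p.1 * (B p.2 * CL) := by
                  rw [lintegral_sub_right_eq_self (fun x => C x) (p.1 + p.2), mul_assoc]
        _ = (∫⁻ x, A x ∂volume) * ∫⁻ x, B x * CL ∂volume :=
            lintegral_prod_mul hAm.aemeasurable (hBm.mul_const CL).aemeasurable
        _ < ∞ := by
            rw [lintegral_mul_const _ hBm]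
            have hAfin : (∫⁻ x, A x ∂volume) ≠ ∞ := by
              rw [hA, lintegral_indicator measurableSet_Ioc]
              exact (hFi T hT).2.ne
            have hBfin : (∫⁻ x, B x ∂volume) ≠ ∞ := by
              rw [hB, lintegral_indicator measurableSet_Ioc]
              exact (hGi T hT).2.ne
            have hCfin : CL ≠ ∞ := by
              rw [hCL, hC, lintegral_indicator measurableSet_Icc]
              exact lint_ne_top (hLi T hT)
            exact ENNReal.mul_lt_top hAfin.lt_top (ENNReal.mul_lt_top hBfin.lt_top hCfin.lt_top)
  filter_upwards [hInt.prod_right_ae] with t ht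
  exact ht

end RGammaAux

open RGammaAux Set
open scoped ENNReal

theorem r_gamma_integrable
    (k l : ℝ → ℝ)
    (hk : ∀ T > (0:ℝ), IntegrableOn k (Set.Ioc 0 T))
    (hl : ∀ T > (0:ℝ), IntegrableOn l (Set.Ioc 0 T))
    (hkl : ∀ t > (0:ℝ), conv k l t = 1)
    (γ : ℝ) (hγ : 0 < γ) (s r : ℝ → ℝ)
    (hs : ∀ T > (0:ℝ), IntegrableOn s (Set.Ioc 0 T))
    (hr : ∀ T > (0:ℝ), IntegrableOn r (Set.Ioc 0 T))
    (hsnn : ∀ᵐ t ∂(volume.restrict (Set.Ioi (0:ℝ))), 0 ≤ s t)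
    (hrnn : ∀ᵐ t ∂(volume.restrict (Set.Ioi (0:ℝ))), 0 ≤ r t)
    (hseq : ∀ᵐ t ∂(volume.restrict (Set.Ioi (0:ℝ))), s t + γ * conv l s t = 1)
    (hreq : ∀ᵐ t ∂(volume.restrict (Set.Ioi (0:ℝ))), r t + γ * conv l r t = l t) :
    IntegrableOn r (Set.Ioi (0:ℝ)) ∧ (∫ τ in Set.Ioi (0:ℝ), r τ) ≤ 1 / γ := by
  obtain ⟨L, hLm, hL0, hlL, hLi⟩ := exists_rep l hl
  obtain ⟨S, hSm, hS0, hsS, hSi⟩ := exists_rep s hs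
  obtain ⟨R, hRm, hR0, hrR, hRi⟩ := exists_rep r hr
  have hconv_ls : ∀ t : ℝ, 0 < t → conv l s t = conv L S t := fun t ht =>
    (conv_congr_left s hlL ht).trans (conv_congr_right L hsS ht)
  have hconv_lr : ∀ t : ℝ, 0 < t → conv l r t = conv L R t := fun t ht =>
    (conv_congr_left r hlL ht).trans (conv_congr_right L hrR ht)
  have hSeq : ∀ᵐ t ∂(volume.restrict (Ioi (0:ℝ))), γ * conv L S t = 1 - S t := by
    filter_upwards [hseq, hsS, ae_restrict_mem measurableSet_Ioi] with t h1 h2 h3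
    rw [← hconv_ls t h3, ← h2]; linarith
  have hReq : ∀ᵐ t ∂(volume.restrict (Ioi (0:ℝ))), γ * conv L R t = L t - R t := by
    filter_upwards [hreq, hrR, hlL, ae_restrict_mem measurableSet_Ioi] with t h1 h2 h3 h4
    rw [← hconv_lr t h4, ← h2, ← h3]; linarith
  have hSnn : ∀ᵐ x ∂(volume : Measure ℝ), 0 ≤ S x := by
    have h1 : ∀ᵐ x ∂(volume : Measure ℝ), x ∈ Ioi (0:ℝ) → 0 ≤ S x := by
      apply ae_imp_of_ae_restrict
      filter_upwards [hsnn, hsS] with x hx he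
      rw [← he]; exact hx
    filter_upwards [h1] with x hx
    by_cases hmem : x ∈ Ioi (0:ℝ)
    · exact hx hmem
    · rw [hS0 x hmem]
  have hRnn : ∀ᵐ x ∂(volume : Measure ℝ), 0 ≤ R x := by
    have h1 : ∀ᵐ x ∂(volume : Measure ℝ), x ∈ Ioi (0:ℝ) → 0 ≤ R x := by
      apply ae_imp_of_ae_restrict
      filter_upwards [hrnn, hrR] with x hx he
      rw [← he]; exact hx
    filter_upwards [h1] with x hx
    by_cases hmem : x ∈ Ioi (0:ℝ)
    · exact hx hmem
    · rw [hR0 x hmem]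
  -- key estimate
  have key : ∀ᵐ t ∂(volume.restrict (Ioi (0:ℝ))), (∫ τ in Ioc (0:ℝ) t, R τ) ≤ 1 / γ := by
    have I1 := ae_integrableOn_mul S R hSm hRm hSi hRi
    have I2 := ae_integrableOn_mul L S hLm hSm hLi hSi
    have I3 := ae_integrableOn_mul R S hRm hSm hRi hSi
    have TRI := psi_ae_integrable L R S hLm hRm hSm hLi hRi hSi
    filter_upwards [I1, I2, I3, TRI, hSeq, ae_restrict_of_ae hSnn,
      ae_restrict_mem measurableSet_Ioi] with t ht1 ht2 ht3 htTRI hteq htS htpos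
    have ht0 : (0:ℝ) < t := htpos
    have hRt : IntegrableOn R (Ioc 0 t) := hRi t ht0
    have e1 : γ * conv (conv L S) R t = (∫ τ in Ioc (0:ℝ) t, R τ) - conv S R t := by
      have a1 : conv (fun u => γ * conv L S u) R t = γ * conv (conv L S) R t :=
        conv_const_mul γ (conv L S) R t
      have a2 : conv (fun u => γ * conv L S u) R t = conv (fun u => 1 - S u) R t :=
        conv_congr_left R hSeq ht0
      have a3 : conv (fun u => 1 - S u) R t = (∫ τ in Ioc (0:ℝ) t, R τ) - conv S R t := by
        rw [conv_Ioc _ _ ht0.le, conv_Ioc S R ht0.le]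
        have hh : ∀ τ : ℝ, (1 - S (t - τ)) * R τ = R τ - S (t - τ) * R τ := fun τ => by ring
        simp only [hh]
        rw [integral_sub hRt ht1]
      rw [← a1, a2, a3]
    have e2 : γ * conv (conv L R) S t = conv L S t - conv R S t := by
      have a1 : conv (fun u => γ * conv L R u) S t = γ * conv (conv L R) S t :=
        conv_const_mul γ (conv L R) S t
      have a2 : conv (fun u => γ * conv L R u) S t = conv (fun u => L u - R u) S t :=
        conv_congr_left S hReq ht0
      have a3 : conv (fun u => L u - R u) S t = conv L S t - conv R S t := by
        rw [conv_Ioc _ _ ht0.le, conv_Ioc L S ht0.le, conv_Ioc R S ht0.le]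
        have hh : ∀ τ : ℝ, (L (t - τ) - R (t - τ)) * S τ
            = L (t - τ) * S τ - R (t - τ) * S τ := fun τ => by ring
        simp only [hh]
        rw [integral_sub ht2 ht3]
      rw [← a1, a2, a3]
    have e3 : γ * conv (conv L S) R t = γ * conv (conv L R) S t := by
      rw [tri_of_integrable L R S ht0 htTRI]
    have e4 : conv S R t = conv R S t := conv_comm S R t
    have hint : (∫ τ in Ioc (0:ℝ) t, R τ) = conv L S t := by linarith
    rw [hint, show conv L S t = (1 - S t) / γ by field_simp; linarith [hteq]]
    rw [div_le_div_iff₀ hγ hγ]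
    nlinarith [htS, hγ]
  -- bound for all T
  have claimA : ∀ T : ℝ, 0 < T → (∫ τ in Ioc (0:ℝ) T, R τ) ≤ 1 / γ := by
    intro T hT
    have hne : (ae (volume.restrict (Ioi T))).NeBot := by
      rw [ae_neBot]
      simp [Measure.restrict_eq_zero, Real.volume_Ioi]
    haveI := hne
    have hsub : Ioi T ⊆ Ioi (0:ℝ) := Ioi_subset_Ioi hT.le
    have hkey2 : ∀ᵐ t ∂(volume.restrict (Ioi T)),
        ((∫ τ in Ioc (0:ℝ) t, R τ) ≤ 1 / γ ∧ t ∈ Ioi T) :=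
      (ae_restrict_of_ae_restrict_of_subset hsub key).and (ae_restrict_mem measurableSet_Ioi)
    obtain ⟨t, h1, h2⟩ := hkey2.exists
    calc (∫ τ in Ioc (0:ℝ) T, R τ) ≤ ∫ τ in Ioc (0:ℝ) t, R τ := by
          apply setIntegral_mono_set (hRi t (hT.trans h2)) (ae_restrict_of_ae hRnn)
          exact (Ioc_subset_Ioc_right h2.le).eventuallyLE
      _ ≤ 1 / γ := h1
  -- lintegral bound
  set f : ℝ → ℝ≥0∞ := fun x => ENNReal.ofReal (R x) with hf
  have hfm : Measurable f := hRm.ennreal_ofReal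
  have hsup : ∀ x, (Ioi (0:ℝ)).indicator f x
      = ⨆ n : ℕ, (Ioc (0:ℝ) ((n:ℝ) + 1)).indicator f x := by
    intro x
    by_cases hx : x ∈ Ioi (0:ℝ)
    · rw [indicator_of_mem hx]
      refine le_antisymm ?_ (iSup_le fun n => indicator_le_self' (fun _ _ => zero_le) x)
      refine le_iSup_of_le ⌈x⌉₊ ?_
      rw [indicator_of_mem (show x ∈ Ioc (0:ℝ) ((⌈x⌉₊:ℝ) + 1) from
        ⟨hx, le_trans (Nat.le_ceil x) (by linarith)⟩)]
    · rw [indicator_of_notMem hx]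
      simp only [mem_Ioi, not_lt] at hx
      refine le_antisymm zero_le (iSup_le fun n => ?_)
      rw [indicator_of_notMem (by simp only [mem_Ioc, not_and_or, not_lt]; left; linarith)]
  have hmono : Monotone (fun n : ℕ => (Ioc (0:ℝ) ((n:ℝ) + 1)).indicator f) := by
    intro m n hmn
    have hc : ((m:ℝ) + 1) ≤ (n:ℝ) + 1 := by
      have := (Nat.cast_le (α := ℝ)).2 hmn
      linarith
    exact indicator_le_indicator_of_subset (Ioc_subset_Ioc_right hc) (fun _ => zero_le)
  have hbound : (∫⁻ x in Ioi (0:ℝ), f x) ≤ ENNReal.ofReal (1 / γ) := by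
    rw [← lintegral_indicator measurableSet_Ioi]
    calc ∫⁻ x, (Ioi (0:ℝ)).indicator f x
        = ∫⁻ x, ⨆ n : ℕ, (Ioc (0:ℝ) ((n:ℝ) + 1)).indicator f x := by
          apply lintegral_congr; exact hsup
      _ = ⨆ n : ℕ, ∫⁻ x, (Ioc (0:ℝ) ((n:ℝ) + 1)).indicator f x :=
          lintegral_iSup (fun n => hfm.indicator measurableSet_Ioc) hmono
      _ ≤ ENNReal.ofReal (1 / γ) := by
          refine iSup_le fun n => ?_
          rw [lintegral_indicator measurableSet_Ioc,
            ← ofReal_integral_eq_lintegral_ofReal (hRi _ (by positivity))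
              (ae_restrict_of_ae hRnn)]
          exact ENNReal.ofReal_le_ofReal (claimA _ (by positivity))
  have hRint : IntegrableOn R (Ioi (0:ℝ)) := by
    constructor
    · exact hRm.aestronglyMeasurable.restrict
    · rw [hasFiniteIntegral_def]
      have heq : (∫⁻ x in Ioi (0:ℝ), ‖R x‖ₑ) = ∫⁻ x in Ioi (0:ℝ), f x := by
        apply lintegral_congr_ae
        filter_upwards [ae_restrict_of_ae hRnn] with x hx
        rw [hf]
        exact Real.enorm_eq_ofReal hx
      rw [heq]
      exact lt_of_le_of_lt hbound ENNReal.ofReal_lt_top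
  have hrint : IntegrableOn r (Ioi (0:ℝ)) :=
    hRint.congr (Filter.EventuallyEq.symm (hrR : r =ᵐ[volume.restrict (Ioi (0:ℝ))] R))
  refine ⟨hrint, ?_⟩
  have hieq : (∫ τ in Ioi (0:ℝ), r τ) = ∫ τ in Ioi (0:ℝ), R τ := integral_congr_ae hrR
  rw [hieq, integral_eq_lintegral_of_nonneg_ae (ae_restrict_of_ae hRnn)
    hRm.aestronglyMeasurable.restrict]
  calc (∫⁻ x in Ioi (0:ℝ), ENNReal.ofReal (R x)).toReal
      ≤ (ENNReal.ofReal (1 / γ)).toReal :=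
        ENNReal.toReal_mono ENNReal.ofReal_ne_top hbound
    _ = 1 / γ := ENNReal.toReal_ofReal (by positivity)
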